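/- arXiv:2102.13540 — 3 statements merged into one kernel-verified Lean document; each statement's English description precedes it below -/
import Mathlib

section
/- Let t ≥ 0 and let t_1,…,t_k be positive, pairwise distinct, and distinct from t. Define q(z) = ∏_{j=1}^k (z + t_j) and let p̄ be the unique polynomial of degree ≤ k−1 with p̄(t_i) = (t + t_i)^{-1} q(t_i) for i = 1,…,k. Then for all z with z ≠ −t and z ∉ {−t_1,…,−t_k}, (t+z)^{-1} − p̄(z)/q(z) = c(t)·∏_{j=1}^k (z − t_j) / ((t+z) ∏_{j=1}^k (z + t_j)), where c(t) = ∏_{j=1}^k (t − t_j)/(t + t_j). -/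
open Polynomial

/-- explicit form of the interpolation error for the resolvent. -/
theorem stmt_7 {k : ℕ} (hk : 0 < k) (t : ℝ) (ht : 0 ≤ t)
    (ts : Fin k → ℝ) (hts : ∀ j, 0 < ts j) (htsinj : Function.Injective ts)
    (htne : ∀ j, t ≠ ts j)
    (pbar : Polynomial ℝ) (hdeg : pbar.degree < (k : ℕ))
    (hinterp : ∀ i, pbar.eval (ts i) = (t + ts i)⁻¹ * ∏ j, (ts i + ts j)) :
    ∀ z : ℝ, z ≠ -t → (∀ j, z ≠ -(ts j)) →
      (t + z)⁻¹ - pbar.eval z / ∏ j, (z + ts j)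
        = (∏ j, (t - ts j) / (t + ts j)) * (∏ j, (z - ts j))
            / ((t + z) * ∏ j, (z + ts j)) := by
  have htpos : ∀ j, (0:ℝ) < t + ts j := fun j => by have := hts j; linarith
  set c : ℝ := ∏ j, (t - ts j) / (t + ts j) with hc
  set Q : Polynomial ℝ := ∏ j, (X + C (ts j)) with hQ
  set P : Polynomial ℝ := ∏ j, (X - C (ts j)) with hP
  set S : Polynomial ℝ := Q - (C t + X) * pbar - C c * P with hS
  have hQeval : ∀ x : ℝ, Q.eval x = ∏ j, (x + ts j) := by
    intro x; simp [hQ, eval_prod]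
  have hPeval : ∀ x : ℝ, P.eval x = ∏ j, (x - ts j) := by
    intro x; simp [hP, eval_prod]
  -- S vanishes at the k+1 distinct points ts 0, ..., ts (k-1), -t
  have hf : Function.Injective (Fin.cons (-t) ts : Fin (k+1) → ℝ) := by
    intro a b hab
    rcases Fin.eq_zero_or_eq_succ a with rfl | ⟨i, rfl⟩ <;>
      rcases Fin.eq_zero_or_eq_succ b with rfl | ⟨j, rfl⟩
    · rfl
    · simp only [Fin.cons_zero, Fin.cons_succ] at hab
      exact absurd hab.symm (by have := hts j; intro h; linarith)
    · simp only [Fin.cons_zero, Fin.cons_succ] at hab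
      exact absurd hab (by have := hts i; intro h; linarith)
    · simp only [Fin.cons_succ] at hab
      exact congrArg Fin.succ (htsinj hab)
  have heval : ∀ i : Fin (k+1), S.eval ((Fin.cons (-t) ts : Fin (k+1) → ℝ) i) = 0 := by
    intro i
    rcases Fin.eq_zero_or_eq_succ i with rfl | ⟨i, rfl⟩
    · simp only [Fin.cons_zero, hS, eval_sub, eval_mul, eval_add, eval_C, eval_X,
        hQeval, hPeval]
      have : (∏ j, (-t + ts j)) = c * ∏ j, (-t - ts j) := by
        rw [hc, ← Finset.prod_mul_distrib]
        refine Finset.prod_congr rfl fun j _ => ?_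
        rw [div_mul_eq_mul_div, eq_div_iff (ne_of_gt (htpos j))]
        ring
      rw [this]; ring
    · have h1 : (∏ j, (ts i - ts j)) = 0 :=
        Finset.prod_eq_zero (Finset.mem_univ i) (by ring)
      simp only [Fin.cons_succ, hS, eval_sub, eval_mul, eval_add, eval_C, eval_X,
        hQeval, hPeval, hinterp i, h1, mul_zero, sub_zero]
      rw [← mul_assoc, mul_inv_cancel₀ (ne_of_gt (htpos i)), one_mul, sub_self]
  have hpn : pbar.natDegree ≤ k - 1 := by
    rcases eq_or_ne pbar 0 with rfl | hp
    · simp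
    · have := (Polynomial.natDegree_lt_iff_degree_lt hp).2 (by exact_mod_cast hdeg)
      omega
  have hdegS : S.natDegree < k + 1 := by
    have h1 : Q.natDegree ≤ k :=
      le_trans (Polynomial.natDegree_prod_le _ _) (by simp)
    have h2 : P.natDegree ≤ k :=
      le_trans (Polynomial.natDegree_prod_le _ _) (by simp)
    have h3 : ((C t + X) * pbar).natDegree ≤ k := by
      refine le_trans Polynomial.natDegree_mul_le ?_
      have hx : (C t + X : Polynomial ℝ).natDegree = 1 := by
        rw [add_comm]; exact Polynomial.natDegree_X_add_C t
      rw [hx]; omega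
    have h4 : (C c * P).natDegree ≤ k :=
      le_trans Polynomial.natDegree_mul_le (by simpa using h2)
    have h5 : S.natDegree ≤ k := by
      rw [hS]
      exact le_trans (Polynomial.natDegree_sub_le _ _)
        (max_le (le_trans (Polynomial.natDegree_sub_le _ _) (max_le h1 h3)) h4)
    omega
  have hS0 : S = 0 := by
    apply Polynomial.eq_zero_of_natDegree_lt_card_of_eval_eq_zero S hf heval
    simpa using hdegS
  have key : ∀ z : ℝ, (∏ j, (z + ts j)) - (t + z) * pbar.eval z
      = c * ∏ j, (z - ts j) := by
    intro z
    have := congrArg (Polynomial.eval z) hS0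
    simp only [hS, eval_sub, eval_mul, eval_add, eval_C, eval_X, eval_zero,
      hQeval, hPeval] at this
    linarith [this]
  intro z hz1 hz2
  have htz : t + z ≠ 0 := fun h => hz1 (by linarith)
  have hqz : (∏ j, (z + ts j)) ≠ 0 :=
    Finset.prod_ne_zero_iff.2 fun j _ h => hz2 j (by linarith)
  have step : (t + z)⁻¹ - pbar.eval z / ∏ j, (z + ts j)
      = ((∏ j, (z + ts j)) - (t + z) * pbar.eval z) / ((t + z) * ∏ j, (z + ts j)) := by
    field_simp
  rw [step, key z, mul_div_assoc]
end

section
/- Let 0 < λ_l ≤ λ_u, t ≥ 0, and t_1,…,t_k positive pairwise distinct. Then there exists a polynomial p of degree ≤ k such that sup_{z ∈ [λ_l, λ_u]} |(t+z)^{-1} − p(z)/q(z)| ≤ (t + λ_l)^{-1} · sup_{z∈[λ_l,λ_u]} ∏_{j=1}^k |z − t_j|/|z + t_j|, where q(z) = ∏_{j=1}^k (z + t_j). -/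
open Polynomial

/-- scalar rational approximation error bound for the resolvent. -/
theorem stmt_9 {k : ℕ} (ll lu t : ℝ) (hll : 0 < ll) (hlu : ll ≤ lu) (ht : 0 ≤ t)
    (ts : Fin k → ℝ) (hts : ∀ j, 0 < ts j) (htsinj : Function.Injective ts) :
    ∃ p : Polynomial ℝ, p.degree ≤ (k : ℕ) ∧
      ∀ z ∈ Set.Icc ll lu,
        |(t + z)⁻¹ - p.eval z / ∏ j, (z + ts j)|
          ≤ (t + ll)⁻¹ * ⨆ w : Set.Icc ll lu, ∏ j, |(w : ℝ) - ts j| / |(w : ℝ) + ts j| := by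
  have hden : (∏ j, (-t - ts j)) ≠ 0 := by
    refine Finset.prod_ne_zero_iff.mpr fun j _ => ?_
    have := hts j; nlinarith
  set c : ℝ := (∏ j, (ts j - t)) / (∏ j, (-t - ts j)) with hc
  set N : Polynomial ℝ := (∏ j, (X + C (ts j))) - C c * ∏ j, (X - C (ts j)) with hN
  have hroot : N.IsRoot (-t) := by
    simp only [hN, IsRoot, eval_sub, eval_mul, eval_C, eval_prod, eval_add, eval_X]
    have h1 : (∏ j, (-t + ts j)) = ∏ j, (ts j - t) := by
      apply Finset.prod_congr rfl; intros; ring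
    rw [h1, hc, div_mul_cancel₀ _ hden, sub_self]
  obtain ⟨p, hp⟩ := dvd_iff_isRoot.mpr hroot
  have hNdeg : N.degree ≤ (k : ℕ) := by
    refine le_trans (degree_sub_le _ _) (max_le ?_ ?_)
    · rw [degree_prod]
      simp [degree_X_add_C]
    · refine le_trans (degree_mul_le _ _) ?_
      rw [degree_prod]
      simp only [degree_X_sub_C, Finset.sum_const, Finset.card_univ, Fintype.card_fin,
        nsmul_eq_mul, mul_one]
      calc (C c).degree + (k : WithBot ℕ) ≤ 0 + (k : WithBot ℕ) := by
            gcongr; exact degree_C_le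
        _ = (k : WithBot ℕ) := by rw [zero_add]
  have hpdeg : p.degree ≤ (k : ℕ) := by
    by_cases hp0 : p = 0
    · simp [hp0]
    · have := degree_le_mul_left p (X_sub_C_ne_zero (-t) : (X - C (-t) : ℝ[X]) ≠ 0)
      rw [mul_comm, ← hp] at this
      exact le_trans this hNdeg
  -- sup bound preliminaries
  have hne : Nonempty (Set.Icc ll lu) := ⟨⟨ll, le_refl _, hlu⟩⟩
  set F : Set.Icc ll lu → ℝ := fun w => ∏ j, |(w : ℝ) - ts j| / |(w : ℝ) + ts j| with hF
  have hF1 : ∀ w, F w ≤ 1 := by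
    intro w
    refine Finset.prod_le_one (fun j _ => by positivity) (fun j _ => ?_)
    have hw : 0 < (w : ℝ) := lt_of_lt_of_le hll w.2.1
    have hj := hts j
    rw [div_le_one (by rw [abs_of_pos (by linarith)]; linarith)]
    rw [abs_of_pos (by linarith : (0:ℝ) < (w : ℝ) + ts j), abs_le]
    constructor <;> linarith
  have hbdd : BddAbove (Set.range F) := ⟨1, by rintro _ ⟨w, rfl⟩; exact hF1 w⟩
  refine ⟨p, hpdeg, fun z hz => ?_⟩
  obtain ⟨hz1, hz2⟩ := hz
  have hzpos : 0 < z := lt_of_lt_of_le hll hz1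
  have htz : 0 < t + z := by linarith
  have hQpos : 0 < ∏ j, (z + ts j) := by
    refine Finset.prod_pos fun j _ => ?_
    have := hts j; linarith
  have heval : (∏ j, (z + ts j)) - c * ∏ j, (z - ts j) = (t + z) * p.eval z := by
    have := congrArg (eval z) hp
    simp only [hN, eval_sub, eval_mul, eval_C, eval_prod, eval_add, eval_X, eval_neg] at this
    linarith [this]
  have hkey : (t + z)⁻¹ - p.eval z / ∏ j, (z + ts j)
      = c * (∏ j, (z - ts j)) / ((t + z) * ∏ j, (z + ts j)) := by
    field_simp
    nlinarith [heval]
  rw [hkey]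
  have hcabs : |c| ≤ 1 := by
    rw [hc, abs_div, Finset.abs_prod, Finset.abs_prod]
    have hdpos : 0 < ∏ x, |-t - ts x| := by
      refine Finset.prod_pos fun j _ => abs_pos.mpr ?_
      have := hts j; nlinarith
    rw [div_le_one hdpos]
    refine Finset.prod_le_prod (fun j _ => abs_nonneg _) (fun j _ => ?_)
    have hj := hts j
    rw [abs_of_neg (by linarith : -t - ts j < 0), abs_le]
    constructor <;> linarith
  -- main estimate
  have hFz : |∏ j, (z - ts j)| / (∏ j, (z + ts j)) = F ⟨z, hz1, hz2⟩ := by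
    show |∏ j, (z - ts j)| / (∏ j, (z + ts j)) = ∏ j, |z - ts j| / |z + ts j|
    rw [Finset.prod_div_distrib, Finset.abs_prod]
    congr 1
    exact Finset.prod_congr rfl fun j _ =>
      (abs_of_pos (by have := hts j; linarith : (0:ℝ) < z + ts j)).symm
  have hsup : F ⟨z, hz1, hz2⟩ ≤ ⨆ w : Set.Icc ll lu, F w := le_ciSup hbdd _
  have h1 : |c * (∏ j, (z - ts j)) / ((t + z) * ∏ j, (z + ts j))|
      = |c| * (|∏ j, (z - ts j)| / (∏ j, (z + ts j))) * (t + z)⁻¹ := by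
    rw [abs_div, abs_mul, abs_mul, abs_of_pos htz, abs_of_pos hQpos, div_eq_mul_inv, mul_inv]
    ring
  rw [h1, hFz]
  have hinv : (t + z)⁻¹ ≤ (t + ll)⁻¹ := by
    apply inv_anti₀ (by linarith) (by linarith)
  have hFnn : 0 ≤ F ⟨z, hz1, hz2⟩ := Finset.prod_nonneg fun j _ => by positivity
  have hsupnn : 0 ≤ ⨆ w, F w := le_trans hFnn hsup
  calc |c| * F ⟨z, hz1, hz2⟩ * (t + z)⁻¹
      ≤ 1 * (⨆ w, F w) * (t + ll)⁻¹ :=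
        mul_le_mul (mul_le_mul hcabs hsup hFnn zero_le_one) hinv
          (inv_nonneg.mpr htz.le) (by positivity)
    _ = (t + ll)⁻¹ * ⨆ w, F w := by ring
end

section
/- Let L be symmetric positive definite with eigenvalues in [λ_1, λ_n], s ∈ (0,1), and suppose for every t ≥ 0 the reduced basis approximation satisfies ‖(tI+L)^{-1}b − V(tI_{k+1}+L_{k+1})^{-1}Vᵀb‖ ≤ 2C (t+λ_1)^{-1} δ_k ‖b‖ for some δ_k ≥ 0. Then ‖L^{−s}b − V L_{k+1}^{−s} Vᵀ b‖ ≤ 2C λ_1^{−s} δ_k ‖b‖. -/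
open Matrix
open MeasureTheory Set Real

noncomputable def enormVec {n : ℕ} (v : Fin n → ℝ) : ℝ := Real.sqrt (∑ i, v i ^ 2)

lemma frac_integrableOn {s lam : ℝ} (hs0 : 0 < s) (hs1 : s < 1) (hlam : 0 < lam) :
    IntegrableOn (fun t : ℝ => t ^ (-s) * (t + lam)⁻¹) (Set.Ioi 0) := by
  have hcont : ContinuousOn (fun t : ℝ => t ^ (-s) * (t + lam)⁻¹) (Set.Ioi 0) := by
    apply ContinuousOn.mul
    · exact fun x hx => (Real.continuousAt_rpow_const x (-s) (Or.inl (ne_of_gt hx))).continuousWithinAt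
    · exact ContinuousOn.inv₀ (by fun_prop)
        (fun x hx => by have : (0:ℝ) < x := hx; positivity)
  rw [← Set.Ioc_union_Ioi_eq_Ioi (zero_le_one : (0:ℝ) ≤ 1)]
  apply IntegrableOn.union
  · have hint : IntegrableOn (fun t : ℝ => t ^ (-s) * lam⁻¹) (Set.Ioc 0 1) := by
      apply Integrable.mul_const
      have := intervalIntegral.intervalIntegrable_rpow' (r := -s) (a := 0) (b := 1) (by linarith)
      rwa [intervalIntegrable_iff_integrableOn_Ioc_of_le zero_le_one] at this
    apply hint.mono' ((hcont.mono (Set.Ioc_subset_Ioi_self)).aestronglyMeasurable measurableSet_Ioc)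
    · filter_upwards [ae_restrict_mem measurableSet_Ioc] with t ht
      have h0 : (0:ℝ) < t := ht.1
      have h1' : (0:ℝ) < t + lam := by positivity
      rw [Real.norm_eq_abs, abs_mul, abs_of_nonneg (Real.rpow_nonneg h0.le _),
        abs_of_nonneg (inv_nonneg.2 h1'.le)]
      have : (t + lam)⁻¹ ≤ lam⁻¹ := by
        apply inv_anti₀ hlam; linarith
      exact mul_le_mul_of_nonneg_left this (Real.rpow_nonneg h0.le _)
  · have hint : IntegrableOn (fun t : ℝ => t ^ (-s - 1)) (Set.Ioi 1) :=
      integrableOn_Ioi_rpow_of_lt (by linarith) one_pos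
    apply hint.mono' ((hcont.mono (Set.Ioi_subset_Ioi zero_le_one)).aestronglyMeasurable measurableSet_Ioi)
    · filter_upwards [ae_restrict_mem measurableSet_Ioi] with t ht
      have h0 : (1:ℝ) < t := ht
      have h1' : (0:ℝ) < t + lam := by positivity
      rw [Real.norm_eq_abs, abs_mul, abs_of_nonneg (Real.rpow_nonneg (by linarith) _),
        abs_of_nonneg (inv_nonneg.2 h1'.le), Real.rpow_sub (by linarith : (0:ℝ) < t), Real.rpow_one]
      rw [div_eq_mul_inv]
      apply mul_le_mul_of_nonneg_left _ (Real.rpow_nonneg (by linarith) _)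
      apply inv_anti₀ (by linarith); linarith

lemma frac_scale {s lam : ℝ} (hlam : 0 < lam) :
    ∫ t in Ioi (0:ℝ), t ^ (-s) * (t + lam)⁻¹
      = lam ^ (-s) * ∫ t in Ioi (0:ℝ), t ^ (-s) * (t + 1)⁻¹ := by
  have h := MeasureTheory.integral_comp_mul_left_Ioi
    (fun t : ℝ => t ^ (-s) * (t + lam)⁻¹) 0 hlam
  rw [mul_zero] at h
  have key : ∀ x ∈ Ioi (0:ℝ), (lam * x) ^ (-s) * (lam * x + lam)⁻¹
      = (lam ^ (-s) * lam⁻¹) * (x ^ (-s) * (x + 1)⁻¹) := by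
    intro x hx
    have hx0 : (0:ℝ) < x := hx
    rw [Real.mul_rpow hlam.le hx0.le]
    have : lam * x + lam = lam * (x + 1) := by ring
    rw [this, mul_inv]
    ring
  rw [setIntegral_congr_fun measurableSet_Ioi key] at h
  rw [MeasureTheory.integral_const_mul, smul_eq_mul] at h
  have hT : (∫ t in Ioi (0:ℝ), t ^ (-s) * (t + lam)⁻¹)
      = lam * (lam ^ (-s) * lam⁻¹ * ∫ t in Ioi (0:ℝ), t ^ (-s) * (t + 1)⁻¹) := by
    have hbeta : (∫ x in Ioi (0:ℝ), (fun t : ℝ => t ^ (-s) * (t + lam)⁻¹) x)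
        = ∫ t in Ioi (0:ℝ), t ^ (-s) * (t + lam)⁻¹ := rfl
    rw [hbeta] at h
    rw [h, ← mul_assoc, mul_inv_cancel₀ hlam.ne', one_mul]
  rw [hT]
  rw [show lam * (lam ^ (-s) * lam⁻¹ * ∫ t in Ioi (0:ℝ), t ^ (-s) * (t + 1)⁻¹)
      = (lam * lam⁻¹) * (lam ^ (-s) * ∫ t in Ioi (0:ℝ), t ^ (-s) * (t + 1)⁻¹) by ring,
    mul_inv_cancel₀ hlam.ne', one_mul]

lemma frac_pos {s : ℝ} (hs0 : 0 < s) (hs1 : s < 1) :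
    0 < ∫ t in Ioi (0:ℝ), t ^ (-s) * (t + 1)⁻¹ := by
  apply (setIntegral_pos_iff_support_of_nonneg_ae _ (frac_integrableOn hs0 hs1 one_pos)).2
  · have : Ioi (0:ℝ) ⊆ Function.support (fun t : ℝ => t ^ (-s) * (t + 1)⁻¹) ∩ Ioi 0 := by
      intro x hx
      have hx0 : (0:ℝ) < x := hx
      refine ⟨?_, hx⟩
      simp only [Function.mem_support]
      positivity
    calc (0:ENNReal) < volume (Ioi (0:ℝ)) := by simp
      _ ≤ _ := measure_mono this
  · filter_upwards [ae_restrict_mem measurableSet_Ioi] with t ht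
    have : (0:ℝ) < t := ht
    positivity

lemma spec_apply {m p : ℕ} (Q : Matrix (Fin m) (Fin p) ℝ) (w : Fin p → ℝ) (b : Fin m → ℝ) :
    (Q * Matrix.diagonal w * Qᵀ) *ᵥ b = ∑ j, ((Qᵀ *ᵥ b) j * w j) • (fun i => Q i j) := by
  funext i
  simp only [Matrix.mulVec, dotProduct, Matrix.mul_apply, Matrix.diagonal_apply,
    Matrix.transpose_apply, Finset.sum_apply, Pi.smul_apply, smul_eq_mul,
    Finset.sum_mul, Finset.mul_sum]
  rw [Finset.sum_comm]
  apply Finset.sum_congr rfl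
  intro l _
  simp only [mul_ite, mul_zero, ite_mul, zero_mul, Finset.sum_ite_eq', Finset.mem_univ, if_true]
  apply Finset.sum_congr rfl
  intro x _
  ring

lemma spec_shift {m : ℕ} (Q : Matrix (Fin m) (Fin m) ℝ) (lam : Fin m → ℝ) (t : ℝ)
    (hQ' : Q * Qᵀ = 1) :
    t • (1 : Matrix (Fin m) (Fin m) ℝ) + Q * Matrix.diagonal lam * Qᵀ
      = Q * Matrix.diagonal (fun j => t + lam j) * Qᵀ := by
  have hd : Matrix.diagonal (fun j : Fin m => t + lam j)
      = t • (1 : Matrix (Fin m) (Fin m) ℝ) + Matrix.diagonal lam := by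
    ext i j
    by_cases h : i = j <;> simp [Matrix.diagonal_apply, Matrix.one_apply, h]
  rw [hd, Matrix.mul_add, Matrix.add_mul]
  congr 1
  rw [Matrix.mul_smul, Matrix.smul_mul, mul_one, hQ']

lemma spec_inv {m : ℕ} (Q : Matrix (Fin m) (Fin m) ℝ) (w : Fin m → ℝ)
    (hQ : Qᵀ * Q = 1) (hQ' : Q * Qᵀ = 1) (hw : ∀ j, w j ≠ 0) :
    (Q * Matrix.diagonal w * Qᵀ)⁻¹ = Q * Matrix.diagonal (fun j => (w j)⁻¹) * Qᵀ := by
  apply Matrix.inv_eq_right_inv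
  have h2 : Q * Matrix.diagonal w * Qᵀ * (Q * Matrix.diagonal (fun j => (w j)⁻¹) * Qᵀ)
      = Q * (Matrix.diagonal w * (Qᵀ * Q) * Matrix.diagonal (fun j => (w j)⁻¹)) * Qᵀ := by
    simp only [Matrix.mul_assoc]
  rw [h2, hQ, Matrix.mul_one, Matrix.diagonal_mul_diagonal]
  have h3 : (fun j => w j * (w j)⁻¹) = fun _ : Fin m => (1:ℝ) := by
    funext j; exact mul_inv_cancel₀ (hw j)
  rw [h3, Matrix.diagonal_one, Matrix.mul_one, hQ']

lemma enorm_eq_norm {N : ℕ} (v : EuclideanSpace ℝ (Fin N)) : enormVec (WithLp.ofLp v) = ‖v‖ := by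
  rw [EuclideanSpace.norm_eq, enormVec]
  congr 1
  apply Finset.sum_congr rfl
  intro i _
  rw [Real.norm_eq_abs, sq_abs]

/-- from a uniform resolvent error bound to an error bound
for the fractional power (Theorem 4.3 mechanism). -/
theorem stmt_15 {n k : ℕ} (L Q : Matrix (Fin n) (Fin n) ℝ)
    (V : Matrix (Fin n) (Fin (k + 1)) ℝ)
    (P : Matrix (Fin (k + 1)) (Fin (k + 1)) ℝ)
    (l1 ln s C delta : ℝ)
    (lam : Fin n → ℝ) (mu : Fin (k + 1) → ℝ) (b : Fin n → ℝ)
    (hs : s ∈ Set.Ioo (0 : ℝ) 1)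
    (h1 : 0 < l1) (hC : 0 ≤ C) (hdelta : 0 ≤ delta)
    (hQ : Qᵀ * Q = 1) (hQ' : Q * Qᵀ = 1)
    (hL : L = Q * Matrix.diagonal lam * Qᵀ)
    (hlam : ∀ i, lam i ∈ Set.Icc l1 ln)
    (hV : Vᵀ * V = 1)
    (hP : Pᵀ * P = 1) (hP' : P * Pᵀ = 1)
    (hmu : ∀ i, 0 < mu i)
    (hLk : Vᵀ * L * V = P * Matrix.diagonal mu * Pᵀ)
    (hres : ∀ t : ℝ, 0 ≤ t →
      enormVec ((t • (1 : Matrix (Fin n) (Fin n) ℝ) + L)⁻¹ *ᵥ b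
          - (V * (t • (1 : Matrix (Fin (k + 1)) (Fin (k + 1)) ℝ) + Vᵀ * L * V)⁻¹ * Vᵀ) *ᵥ b)
        ≤ 2 * C * (t + l1)⁻¹ * delta * enormVec b) :
    enormVec ((Q * Matrix.diagonal (fun i => lam i ^ (-s)) * Qᵀ) *ᵥ b
        - (V * (P * Matrix.diagonal (fun i => mu i ^ (-s)) * Pᵀ) * Vᵀ) *ᵥ b)
      ≤ 2 * C * l1 ^ (-s) * delta * enormVec b := by
  obtain ⟨hs0, hs1⟩ := hs
  have hlp : ∀ j, 0 < lam j := fun j => lt_of_lt_of_le h1 (hlam j).1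
  set I1 : ℝ := ∫ t in Ioi (0:ℝ), t ^ (-s) * (t + 1)⁻¹ with hI1def
  have hI1 : 0 < I1 := frac_pos hs0 hs1
  set W : Matrix (Fin n) (Fin (k+1)) ℝ := V * P with hWdef
  have hWT : Wᵀ = Pᵀ * Vᵀ := by rw [hWdef, Matrix.transpose_mul]
  set a : Fin n → ℝ := Qᵀ *ᵥ b with hadef
  set e : Fin (k+1) → ℝ := Wᵀ *ᵥ b with hedef
  set qcol : Fin n → EuclideanSpace ℝ (Fin n) := fun j => WithLp.toLp 2 (fun i => Q i j) with hqdef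
  set wcol : Fin (k+1) → EuclideanSpace ℝ (Fin n) := fun j => WithLp.toLp 2 (fun i => W i j) with hwdef
  set F : EuclideanSpace ℝ (Fin n) :=
    (∑ j, (a j * lam j ^ (-s)) • qcol j) - (∑ j, (e j * mu j ^ (-s)) • wcol j) with hFdef
  set g : ℝ → EuclideanSpace ℝ (Fin n) := fun t =>
    (∑ j, (a j * (t ^ (-s) * (t + lam j)⁻¹)) • qcol j)
      - (∑ j, (e j * (t ^ (-s) * (t + mu j)⁻¹)) • wcol j) with hgdef
  -- step 1: the target vector equals F
  have htarget : ((Q * Matrix.diagonal (fun i => lam i ^ (-s)) * Qᵀ) *ᵥ b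
        - (V * (P * Matrix.diagonal (fun i => mu i ^ (-s)) * Pᵀ) * Vᵀ) *ᵥ b) = F := by
    have h2 : V * (P * Matrix.diagonal (fun i => mu i ^ (-s)) * Pᵀ) * Vᵀ
        = W * Matrix.diagonal (fun i => mu i ^ (-s)) * Wᵀ := by
      rw [hWT, hWdef]; simp only [Matrix.mul_assoc]
    rw [h2, spec_apply, spec_apply]
    simp only [hFdef, hadef, hedef, hqdef, hwdef, WithLp.ofLp_sub, WithLp.ofLp_sum, WithLp.ofLp_smul,
      WithLp.ofLp_toLp]
  -- step 2: resolvent identification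
  have hd : ∀ t : ℝ, 0 ≤ t →
      ((t • (1 : Matrix (Fin n) (Fin n) ℝ) + L)⁻¹ *ᵥ b
        - (V * (t • (1 : Matrix (Fin (k + 1)) (Fin (k + 1)) ℝ) + Vᵀ * L * V)⁻¹ * Vᵀ) *ᵥ b)
      = ((∑ j, (a j * (t + lam j)⁻¹) • qcol j) - (∑ j, (e j * (t + mu j)⁻¹) • wcol j)
          : EuclideanSpace ℝ (Fin n)) := by
    intro t ht
    have hne1 : ∀ j, t + lam j ≠ 0 := fun j => by have := hlp j; positivity
    have hne2 : ∀ j, t + mu j ≠ 0 := fun j => by have := hmu j; positivity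
    have e1 : (t • (1 : Matrix (Fin n) (Fin n) ℝ) + L)⁻¹ *ᵥ b
        = ∑ j, (a j * (t + lam j)⁻¹) • (fun i => Q i j) := by
      rw [hL, spec_shift Q lam t hQ', spec_inv Q _ hQ hQ' hne1, spec_apply]
    have e2 : (V * (t • (1 : Matrix (Fin (k + 1)) (Fin (k + 1)) ℝ) + Vᵀ * L * V)⁻¹ * Vᵀ) *ᵥ b
        = ∑ j, (e j * (t + mu j)⁻¹) • (fun i => W i j) := by
      rw [hLk, spec_shift P mu t hP', spec_inv P _ hP hP' hne2]
      have h3 : V * (P * Matrix.diagonal (fun j => (t + mu j)⁻¹) * Pᵀ) * Vᵀ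
          = W * Matrix.diagonal (fun j => (t + mu j)⁻¹) * Wᵀ := by
        rw [hWT, hWdef]; simp only [Matrix.mul_assoc]
      rw [h3, spec_apply]
    rw [e1, e2]
    simp only [hqdef, hwdef, WithLp.ofLp_sub, WithLp.ofLp_sum, WithLp.ofLp_smul, WithLp.ofLp_toLp]
  -- step 3: g t = t^(-s) • (resolvent difference)
  have hg_d : ∀ t : ℝ, 0 < t → g t = (t ^ (-s)) •
      (WithLp.toLp 2 ((t • (1 : Matrix (Fin n) (Fin n) ℝ) + L)⁻¹ *ᵥ b
        - (V * (t • (1 : Matrix (Fin (k + 1)) (Fin (k + 1)) ℝ) + Vᵀ * L * V)⁻¹ * Vᵀ) *ᵥ b)) := by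
    intro t ht
    have hge : g t = ∑ j, (a j * (t ^ (-s) * (t + lam j)⁻¹)) • qcol j
        - ∑ j, (e j * (t ^ (-s) * (t + mu j)⁻¹)) • wcol j := rfl
    rw [hge, hd t ht.le, WithLp.toLp_ofLp, smul_sub, Finset.smul_sum, Finset.smul_sum]
    congr 1 <;> (apply Finset.sum_congr rfl; intro j _; rw [smul_smul]; congr 1; ring)
  -- integrability of g
  have hg_int : IntegrableOn g (Ioi (0:ℝ)) := by
    apply Integrable.sub
    · apply integrable_finset_sum
      intro j _
      exact ((frac_integrableOn hs0 hs1 (hlp j)).const_mul (a j)).smul_const (qcol j)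
    · apply integrable_finset_sum
      intro j _
      exact ((frac_integrableOn hs0 hs1 (hmu j)).const_mul (e j)).smul_const (wcol j)
  -- integral of g
  have hg_val : (∫ t in Ioi (0:ℝ), g t) = I1 • F := by
    simp only [hgdef]
    rw [integral_sub (integrable_finset_sum _ (fun j _ =>
          ((frac_integrableOn hs0 hs1 (hlp j)).const_mul (a j)).smul_const (qcol j)))
        (integrable_finset_sum _ (fun j _ =>
          ((frac_integrableOn hs0 hs1 (hmu j)).const_mul (e j)).smul_const (wcol j)))]
    rw [integral_finset_sum _ (fun j _ =>
          ((frac_integrableOn hs0 hs1 (hlp j)).const_mul (a j)).smul_const (qcol j)),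
        integral_finset_sum _ (fun j _ =>
          ((frac_integrableOn hs0 hs1 (hmu j)).const_mul (e j)).smul_const (wcol j))]
    rw [hFdef, smul_sub, Finset.smul_sum, Finset.smul_sum]
    congr 1
    · apply Finset.sum_congr rfl
      intro j _
      rw [integral_smul_const, MeasureTheory.integral_const_mul, frac_scale (hlp j), smul_smul]
      congr 1
      ring
    · apply Finset.sum_congr rfl
      intro j _
      rw [integral_smul_const, MeasureTheory.integral_const_mul, frac_scale (hmu j), smul_smul]
      congr 1
      ring
  -- norm bound for g
  set bnd : ℝ → ℝ := fun t => (2 * C * delta * enormVec b) * (t ^ (-s) * (t + l1)⁻¹) with hbnddef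
  have hbnd_int : IntegrableOn bnd (Ioi (0:ℝ)) :=
    (frac_integrableOn hs0 hs1 h1).const_mul _
  have hg_norm : ∀ t ∈ Ioi (0:ℝ), ‖g t‖ ≤ bnd t := by
    intro t ht
    have ht0 : (0:ℝ) < t := ht
    rw [hg_d t ht0, norm_smul, Real.norm_eq_abs, abs_of_nonneg (Real.rpow_nonneg ht0.le _)]
    rw [← enorm_eq_norm]
    calc t ^ (-s) * enormVec _ ≤ t ^ (-s) * (2 * C * (t + l1)⁻¹ * delta * enormVec b) := by
          apply mul_le_mul_of_nonneg_left (hres t ht0.le) (Real.rpow_nonneg ht0.le _)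
      _ = bnd t := by rw [hbnddef]; ring
  -- integral of bnd
  have hbnd_val : (∫ t in Ioi (0:ℝ), bnd t) = (2 * C * delta * enormVec b) * (l1 ^ (-s) * I1) := by
    rw [hbnddef, MeasureTheory.integral_const_mul, frac_scale h1]
  -- final chain
  rw [htarget, enorm_eq_norm]
  have hFval : F = I1⁻¹ • ∫ t in Ioi (0:ℝ), g t := by
    rw [hg_val, smul_smul, inv_mul_cancel₀ hI1.ne', one_smul]
  rw [hFval, norm_smul, Real.norm_eq_abs, abs_of_nonneg (inv_nonneg.2 hI1.le)]
  have step1 : ‖∫ t in Ioi (0:ℝ), g t‖ ≤ ∫ t in Ioi (0:ℝ), ‖g t‖ :=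
    norm_integral_le_integral_norm g
  have step2 : (∫ t in Ioi (0:ℝ), ‖g t‖) ≤ ∫ t in Ioi (0:ℝ), bnd t :=
    setIntegral_mono_on hg_int.norm hbnd_int measurableSet_Ioi hg_norm
  calc I1⁻¹ * ‖∫ t in Ioi (0:ℝ), g t‖
      ≤ I1⁻¹ * ∫ t in Ioi (0:ℝ), bnd t := by
        apply mul_le_mul_of_nonneg_left (le_trans step1 step2) (inv_nonneg.2 hI1.le)
    _ = 2 * C * l1 ^ (-s) * delta * enormVec b := by
        rw [hbnd_val]
        field_simp
end
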